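/- arXiv:1910.10659 — 2 statements merged into one kernel-verified Lean document; each statement's English description precedes it below -/
import Mathlib

section
/- Let λ* > 0 and L be real numbers with L < (1/4)(λ*)², let J : ℝ → ℝ be a function satisfying J(λ) ≥ 0 for all λ ∈ [0, λ*], and let f, g : [0, T) → ℝ (with 0 < T ≤ ∞) be continuous nonnegative functions such that f(0) < λ*, g(0) < λ*, and for every t ∈ [0, T) one has (1/4)f(t)² + J(f(t)) + (1/4)g(t)² + J(g(t)) ≤ L. Then f(t) < λ* and g(t) < λ* for every t ∈ [0, T). -/
open scoped ENNReal

/-- (Abstract continuation/invariance argument, Lemma 3.1.)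
Let `λ* > 0` and `L < (1/4)(λ*)²`, let `J` satisfy `J(λ) ≥ 0` on `[0, λ*]`, and let
`f, g : [0, T) → ℝ` (with `0 < T ≤ ∞`) be continuous nonnegative functions with
`f(0) < λ*`, `g(0) < λ*` and
`(1/4)f(t)² + J(f(t)) + (1/4)g(t)² + J(g(t)) ≤ L` for all `t ∈ [0, T)`.
Then `f(t) < λ*` and `g(t) < λ*` for all `t ∈ [0, T)`.
Here `[0, T)` is encoded as `{t : ℝ | 0 ≤ t ∧ ENNReal.ofReal t < T}` with `T : ℝ≥0∞`. -/
theorem stmt6 (lam L : ℝ) (hlam : 0 < lam) (hL : L < (1 / 4) * lam ^ 2)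
    (J : ℝ → ℝ) (hJ : ∀ x ∈ Set.Icc (0 : ℝ) lam, 0 ≤ J x)
    (T : ℝ≥0∞) (hT : 0 < T) (f g : ℝ → ℝ)
    (hfc : ContinuousOn f {t : ℝ | 0 ≤ t ∧ ENNReal.ofReal t < T})
    (hgc : ContinuousOn g {t : ℝ | 0 ≤ t ∧ ENNReal.ofReal t < T})
    (hfpos : ∀ t : ℝ, 0 ≤ t → ENNReal.ofReal t < T → 0 ≤ f t)
    (hgpos : ∀ t : ℝ, 0 ≤ t → ENNReal.ofReal t < T → 0 ≤ g t)
    (hf0 : f 0 < lam) (hg0 : g 0 < lam)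
    (hineq : ∀ t : ℝ, 0 ≤ t → ENNReal.ofReal t < T →
      (1 / 4) * (f t) ^ 2 + J (f t) + (1 / 4) * (g t) ^ 2 + J (g t) ≤ L) :
    ∀ t : ℝ, 0 ≤ t → ENNReal.ofReal t < T → f t < lam ∧ g t < lam := by
  intro t ht htT
  set D : Set ℝ := {t : ℝ | 0 ≤ t ∧ ENNReal.ofReal t < T}
  have hsub : Set.Icc (0 : ℝ) t ⊆ D := by
    intro s hs
    exact ⟨hs.1, lt_of_le_of_lt (ENNReal.ofReal_le_ofReal hs.2) htT⟩
  set h : ℝ → ℝ := fun s => max (f s) (g s) with hh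
  have hhc : ContinuousOn h (Set.Icc (0 : ℝ) t) :=
    (hfc.mono hsub).sup (hgc.mono hsub)
  -- key: h never reaches lam on the domain
  have key : ∀ s, 0 ≤ s → ENNReal.ofReal s < T → h s ≠ lam := by
    intro s hs hsT heq
    have hf0' := hfpos s hs hsT
    have hg0' := hgpos s hs hsT
    have hfle : f s ≤ lam := heq ▸ le_max_left _ _
    have hgle : g s ≤ lam := heq ▸ le_max_right _ _
    have hJf : 0 ≤ J (f s) := hJ _ ⟨hf0', hfle⟩
    have hJg : 0 ≤ J (g s) := hJ _ ⟨hg0', hgle⟩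
    have hineq' := hineq s hs hsT
    have hmax : (1 / 4) * lam ^ 2 ≤ (1 / 4) * (f s) ^ 2 + (1 / 4) * (g s) ^ 2 := by
      rcases max_cases (f s) (g s) with ⟨hc, _⟩ | ⟨hc, _⟩ <;> rw [hh] at heq <;>
        simp only at heq <;> nlinarith [sq_nonneg (f s), sq_nonneg (g s)]
    linarith
  by_contra hcon
  have hlt : lam ≤ h t := by
    rcases not_and_or.mp hcon with hc | hc
    · exact le_trans (not_lt.mp hc) (le_max_left _ _)
    · exact le_trans (not_lt.mp hc) (le_max_right _ _)
  have h0 : h 0 < lam := max_lt hf0 hg0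
  have hmem : lam ∈ Set.Icc (h 0) (h t) := ⟨h0.le, hlt⟩
  obtain ⟨s, hsI, hse⟩ := intermediate_value_Icc ht hhc hmem
  exact key s hsI.1 (lt_of_le_of_lt (ENNReal.ofReal_le_ofReal hsI.2) htT) hse
end

section
/- Let m₀, P, D be positive real numbers and set τ = min{ 1/(2P), m₀/D }. Let E, ψ : [0, ∞) → ℝ be differentiable functions and g : [0, ∞) → ℝ a function such that for all t ≥ 0: E(t) ≥ 0, g(t) ≥ 0, E'(t) ≤ −m₀ g(t), |ψ(t)| ≤ P·E(t), and ψ'(t) ≤ −(1/2)E(t) + D·g(t). Then E(t) ≤ 3 E(0) e^{−(τ/3) t} for all t ∈ [0, ∞). -/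
/-- (Abstract perturbed-energy / Komornik–Zuazua argument, Theorem 2.5.)
Let `m₀, P, D > 0` and `τ = min(1/(2P), m₀/D)`.  Let `E, ψ : [0,∞) → ℝ` be differentiable
(with derivatives `E'`, `ψ'` in the sense of `HasDerivWithinAt` on `[0,∞)`) and
`g : [0,∞) → ℝ` such that for all `t ≥ 0`: `E(t) ≥ 0`, `g(t) ≥ 0`, `E'(t) ≤ −m₀ g(t)`,
`|ψ(t)| ≤ P·E(t)` and `ψ'(t) ≤ −(1/2)E(t) + D·g(t)`.
Then `E(t) ≤ 3 E(0) e^{−(τ/3)t}` for all `t ≥ 0`. -/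
theorem stmt9 (m₀ P D : ℝ) (hm₀ : 0 < m₀) (hP : 0 < P) (hD : 0 < D)
    (τ : ℝ) (hτ : τ = min (1 / (2 * P)) (m₀ / D))
    (E ψ : ℝ → ℝ) (E' ψ' g : ℝ → ℝ)
    (hE : ∀ t : ℝ, 0 ≤ t → HasDerivWithinAt E (E' t) (Set.Ici 0) t)
    (hψ : ∀ t : ℝ, 0 ≤ t → HasDerivWithinAt ψ (ψ' t) (Set.Ici 0) t)
    (hEpos : ∀ t : ℝ, 0 ≤ t → 0 ≤ E t)
    (hgpos : ∀ t : ℝ, 0 ≤ t → 0 ≤ g t)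
    (hE' : ∀ t : ℝ, 0 ≤ t → E' t ≤ -m₀ * g t)
    (hψbd : ∀ t : ℝ, 0 ≤ t → |ψ t| ≤ P * E t)
    (hψ' : ∀ t : ℝ, 0 ≤ t → ψ' t ≤ -(1 / 2) * E t + D * g t) :
    ∀ t : ℝ, 0 ≤ t → E t ≤ 3 * E 0 * Real.exp (-(τ / 3) * t) := by
  have hτpos : 0 < τ := by
    rw [hτ]; exact lt_min (by positivity) (by positivity)
  have hτP : τ * P ≤ 1 / 2 := by
    have h1 : τ ≤ 1 / (2 * P) := hτ ▸ min_le_left _ _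
    have h2 := mul_le_mul_of_nonneg_right h1 hP.le
    rw [div_mul_eq_mul_div, one_mul] at h2
    calc τ * P ≤ P / (2 * P) := h2
      _ = 1 / 2 := by field_simp
  have hτD : τ * D ≤ m₀ := by
    have h1 : τ ≤ m₀ / D := hτ ▸ min_le_right _ _
    have h2 := mul_le_mul_of_nonneg_right h1 hD.le
    rwa [div_mul_cancel₀ _ hD.ne'] at h2
  obtain ⟨c, hc⟩ : ∃ c : ℝ, c = τ / 3 := ⟨_, rfl⟩
  have hcpos : 0 < c := by rw [hc]; positivity
  obtain ⟨F, hFdef⟩ : ∃ F : ℝ → ℝ, F = fun t => E t + τ * ψ t := ⟨_, rfl⟩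
  -- bounds on F
  have hψE : ∀ t : ℝ, 0 ≤ t → τ * |ψ t| ≤ (1 / 2) * E t := by
    intro t ht
    calc τ * |ψ t| ≤ τ * (P * E t) :=
          mul_le_mul_of_nonneg_left (hψbd t ht) hτpos.le
      _ = (τ * P) * E t := by ring
      _ ≤ (1 / 2) * E t := mul_le_mul_of_nonneg_right hτP (hEpos t ht)
  have hFlow : ∀ t : ℝ, 0 ≤ t → (1 / 2) * E t ≤ F t := by
    intro t ht
    have h1 : -((1 / 2) * E t) ≤ τ * ψ t := by
      have h2 := hψE t ht
      have habs : -(τ * |ψ t|) ≤ τ * ψ t := by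
        have h3 := neg_abs_le (ψ t)
        nlinarith [hτpos.le]
      linarith
    rw [hFdef]; dsimp only; linarith
  have hFhigh : ∀ t : ℝ, 0 ≤ t → F t ≤ (3 / 2) * E t := by
    intro t ht
    have h1 : τ * ψ t ≤ τ * |ψ t| :=
      mul_le_mul_of_nonneg_left (le_abs_self _) hτpos.le
    have h2 := hψE t ht
    rw [hFdef]; dsimp only; linarith
  -- derivative bound for F
  have hF' : ∀ t : ℝ, 0 ≤ t → E' t + τ * ψ' t ≤ -(τ / 2) * E t := by
    intro t ht
    have h1 := hE' t ht
    have h2 : τ * ψ' t ≤ τ * (-(1 / 2) * E t + D * g t) :=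
      mul_le_mul_of_nonneg_left (hψ' t ht) hτpos.le
    have h3 : (τ * D - m₀) * g t ≤ 0 :=
      mul_nonpos_of_nonpos_of_nonneg (by linarith) (hgpos t ht)
    nlinarith
  have hFderiv : ∀ t : ℝ, 0 ≤ t →
      HasDerivWithinAt F (E' t + τ * ψ' t) (Set.Ici 0) t := by
    intro t ht
    rw [hFdef]
    exact (hE t ht).add ((hψ t ht).const_mul τ)
  -- G = F * exp(c t) is antitone on Ici 0
  set G : ℝ → ℝ := fun t => F t * Real.exp (c * t) with hGdef
  have hGanti : AntitoneOn G (Set.Ici (0 : ℝ)) := by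
    apply antitoneOn_of_deriv_nonpos (convex_Ici 0)
    · intro t ht
      exact ((hFderiv t ht).mul
        (((hasDerivAt_id t).const_mul c).exp.hasDerivWithinAt)).continuousWithinAt
    · rw [interior_Ici]
      intro t ht
      have ht' : (0 : ℝ) ≤ t := le_of_lt ht
      have hmem : Set.Ici (0 : ℝ) ∈ nhds t := Ici_mem_nhds ht
      have hFat : HasDerivAt F (E' t + τ * ψ' t) t :=
        (hFderiv t ht').hasDerivAt hmem
      have hexp : HasDerivAt (fun s => Real.exp (c * s))
          (Real.exp (c * t) * c) t := by
        simpa using ((hasDerivAt_id t).const_mul c).exp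
      exact (hFat.mul hexp).differentiableAt.differentiableWithinAt
    · rw [interior_Ici]
      intro t ht
      have ht' : (0 : ℝ) ≤ t := le_of_lt ht
      have hmem : Set.Ici (0 : ℝ) ∈ nhds t := Ici_mem_nhds ht
      have hFat : HasDerivAt F (E' t + τ * ψ' t) t :=
        (hFderiv t ht').hasDerivAt hmem
      have hexp : HasDerivAt (fun s => Real.exp (c * s))
          (Real.exp (c * t) * c) t := by
        simpa using ((hasDerivAt_id t).const_mul c).exp
      have hG : HasDerivAt G
          ((E' t + τ * ψ' t) * Real.exp (c * t) + F t * (Real.exp (c * t) * c)) t :=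
        hFat.mul hexp
      rw [hG.deriv]
      have hEexp : (0 : ℝ) < Real.exp (c * t) := Real.exp_pos _
      have h1 : E' t + τ * ψ' t + c * F t ≤ 0 := by
        have hA := hF' t ht'
        have hB : c * F t ≤ (τ / 2) * E t := by
          calc c * F t ≤ c * ((3 / 2) * E t) :=
                mul_le_mul_of_nonneg_left (hFhigh t ht') hcpos.le
            _ = (τ / 2) * E t := by rw [hc]; ring
        linarith
      nlinarith
  -- conclude
  intro t ht
  have hGle : G t ≤ G 0 := hGanti (Set.self_mem_Ici) ht ht
  have hG0 : G 0 = F 0 := by simp [hGdef]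
  have hF0 : F 0 ≤ (3 / 2) * E 0 := hFhigh 0 le_rfl
  have hFt : (1 / 2) * E t ≤ F t := hFlow t ht
  have hEexp : (0 : ℝ) < Real.exp (c * t) := Real.exp_pos _
  have key : (1 / 2) * E t * Real.exp (c * t) ≤ (3 / 2) * E 0 := by
    calc (1 / 2) * E t * Real.exp (c * t) ≤ F t * Real.exp (c * t) :=
          mul_le_mul_of_nonneg_right hFt hEexp.le
      _ = G t := rfl
      _ ≤ G 0 := hGle
      _ = F 0 := hG0
      _ ≤ (3 / 2) * E 0 := hF0
  have hrw : Real.exp (-(τ / 3) * t) = (Real.exp (c * t))⁻¹ := by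
    rw [← Real.exp_neg, hc]; ring_nf
  rw [hrw, ← div_eq_mul_inv, le_div_iff₀ hEexp]
  nlinarith [key]
end
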